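/- Let G be a discrete group satisfying the Følner condition: for every finite set K ⊆ G and every δ > 0 the collection M(K, δ) of nonempty finite subsets F ⊆ G with |{s ∈ F : Ks ⊆ F}| ≥ (1 − δ)|F| is nonempty. Let φ be a real-valued function defined on the finite subsets of G satisfying: (1) 0 ≤ φ(A) < +∞ and φ(∅) = 0; (2) φ(A) ≤ φ(B) whenever A ⊆ B; (3) φ(As) = φ(A) for every finite A ⊆ G and s ∈ G; (4) φ(A ∪ B) ≤ φ(A) + φ(B) whenever A ∩ B = ∅. Then there exists b ∈ ℝ such that for every ε > 0 there exist a finite set K ⊆ G and a δ > 0 such that |φ(F)/|F| − b| < ε for every F ∈ M(K, δ). -/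
import Mathlib

open Finset Pointwise
set_option linter.unusedSectionVars false
set_option linter.unusedVariables false
set_option maxHeartbeats 1000000

namespace OW

variable {G : Type*} [Group G] [DecidableEq G]

/-- right translate of a finset -/
def tr (T : Finset G) (c : G) : Finset G := T.image (fun t => t * c)

lemma tr_card (T : Finset G) (c : G) : (tr T c).card = T.card :=
  Finset.card_image_of_injective _ (mul_left_injective c)

lemma mem_tr {T : Finset G} {c x : G} : x ∈ tr T c ↔ ∃ t ∈ T, t * c = x := by
  unfold tr; rw [Finset.mem_image]

lemma tr_subset_iff {T A : Finset G} {c : G} : tr T c ⊆ A ↔ ∀ t ∈ T, t * c ∈ A := by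
  unfold tr; rw [Finset.image_subset_iff]

section phi
variable (φ : Finset G → ℝ)

lemma phi_le (hempty : φ ∅ = 0)
    (htrans : ∀ (A : Finset G) (s : G), φ (A.image fun t => t * s) = φ A)
    (hsub : ∀ A B : Finset G, Disjoint A B → φ (A ∪ B) ≤ φ A + φ B) :
    ∀ F : Finset G, φ F ≤ F.card * φ {1} := by
  intro F
  induction F using Finset.induction with
  | empty => simp [hempty]
  | @insert x F hx ih =>
    have h1 : φ {x} = φ {1} := by
      have := htrans {1} x; simpa using this
    have h2 : φ (insert x F) ≤ φ {x} + φ F := by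
      rw [Finset.insert_eq]
      exact hsub {x} F (Finset.disjoint_singleton_left.mpr hx)
    rw [Finset.card_insert_of_notMem hx]
    push_cast
    linarith [h2, ih, h1.le, h1.ge]

lemma phi_union_le (hmono : ∀ A B : Finset G, A ⊆ B → φ A ≤ φ B)
    (hsub : ∀ A B : Finset G, Disjoint A B → φ (A ∪ B) ≤ φ A + φ B)
    (X Y : Finset G) : φ (X ∪ Y) ≤ φ X + φ Y := by
  have h1 : X ∪ (Y \ X) = X ∪ Y := Finset.union_sdiff_self_eq_union
  have h2 := hsub X (Y \ X) Finset.disjoint_sdiff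
  rw [h1] at h2
  exact h2.trans (by linarith [hmono _ _ (Finset.sdiff_subset : Y \ X ⊆ Y)])

lemma phi_biUnion_le (hempty : φ ∅ = 0)
    (hmono : ∀ A B : Finset G, A ⊆ B → φ A ≤ φ B)
    (htrans : ∀ (A : Finset G) (s : G), φ (A.image fun t => t * s) = φ A)
    (hsub : ∀ A B : Finset G, Disjoint A B → φ (A ∪ B) ≤ φ A + φ B)
    (T C : Finset G) : φ (C.biUnion (tr T)) ≤ C.card * φ T := by
  induction C using Finset.induction with
  | empty => simp [hempty]
  | @insert c C hc ih =>
    rw [Finset.biUnion_insert, Finset.card_insert_of_notMem hc]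
    have h1 : φ (tr T c) = φ T := htrans T c
    have h2 := phi_union_le φ hmono hsub (tr T c) (C.biUnion (tr T))
    push_cast
    linarith

end phi

lemma double_count (T Z U : Finset G) :
    ∑ c ∈ Z, ((tr T c) ∩ U).card ≤ T.card * U.card := by
  have h1 : ∀ c : G, ((tr T c) ∩ U).card = ∑ u ∈ U, if u ∈ tr T c then 1 else 0 := by
    intro c
    rw [Finset.inter_comm, ← Finset.filter_mem_eq_inter, Finset.card_filter]
  calc ∑ c ∈ Z, ((tr T c) ∩ U).card
      = ∑ c ∈ Z, ∑ u ∈ U, if u ∈ tr T c then 1 else 0 := by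
        exact Finset.sum_congr rfl (fun c _ => h1 c)
    _ = ∑ u ∈ U, ∑ c ∈ Z, if u ∈ tr T c then 1 else 0 := Finset.sum_comm
    _ ≤ ∑ u ∈ U, T.card := by
        refine Finset.sum_le_sum (fun u _ => ?_)
        rw [← Finset.card_filter]
        calc (Z.filter (fun c => u ∈ tr T c)).card
            ≤ (T.image (fun t => t⁻¹ * u)).card := by
              apply Finset.card_le_card
              intro c hcz
              rw [Finset.mem_filter] at hcz
              obtain ⟨t, ht, htc⟩ := mem_tr.mp hcz.2
              exact Finset.mem_image.mpr ⟨t, ht, by rw [← htc]; group⟩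
          _ ≤ T.card := Finset.card_image_le
    _ = T.card * U.card := by rw [Finset.sum_const, smul_eq_mul, mul_comm]


lemma greedy (T A : Finset G) (hT : T.Nonempty) (ε : ℝ) (hε0 : 0 < ε) (hε1 : ε < 1) :
    ∃ C : Finset G,
      (∀ c ∈ C, tr T c ⊆ A) ∧
      (1 - ε) * T.card * C.card ≤ ((C.biUnion (tr T)).card : ℝ) ∧
      (∀ c : G, tr T c ⊆ A → ε * T.card ≤ (((tr T c) ∩ (C.biUnion (tr T))).card : ℝ)) := by
  classical
  set pool : Finset G := A.biUnion (fun x => T.image (fun t => t⁻¹ * x)) with hpool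
  set P : Finset G → Prop := fun C => (∀ c ∈ C, tr T c ⊆ A) ∧
    (1 - ε) * T.card * C.card ≤ ((C.biUnion (tr T)).card : ℝ) with hP
  have hsubpool : ∀ C : Finset G, (∀ c ∈ C, tr T c ⊆ A) → C ⊆ pool := by
    intro C hC c hc
    obtain ⟨t, ht⟩ := hT
    have : t * c ∈ A := (hC c hc) (mem_tr.mpr ⟨t, ht, rfl⟩)
    exact Finset.mem_biUnion.mpr ⟨t * c, this,
      Finset.mem_image.mpr ⟨t, ht, by group⟩⟩
  set s : Finset (Finset G) := pool.powerset.filter P with hs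
  have hsne : s.Nonempty := by
    refine ⟨∅, Finset.mem_filter.mpr ⟨Finset.mem_powerset.mpr (Finset.empty_subset _), ?_, ?_⟩⟩
    · intro c hc; simp at hc
    · simp
  obtain ⟨C, hCs, hmax⟩ := s.exists_max_image (fun C => (C.biUnion (tr T)).card) hsne
  have hCP : P C := (Finset.mem_filter.mp hCs).2
  refine ⟨C, hCP.1, hCP.2, ?_⟩
  intro c hc
  by_contra hcon
  push_neg at hcon
  set U : Finset G := C.biUnion (tr T) with hU
  -- c ∉ C
  have hTpos : (0:ℝ) < T.card := by exact_mod_cast Finset.card_pos.mpr hT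
  have hcC : c ∉ C := by
    intro hcc
    have hsub : tr T c ⊆ U := Finset.subset_biUnion_of_mem (tr T) hcc
    have : (tr T c) ∩ U = tr T c := Finset.inter_eq_left.mpr hsub
    rw [this, tr_card] at hcon
    nlinarith
  -- C' = insert c C is better
  set C' : Finset G := insert c C with hC'
  have hUC' : C'.biUnion (tr T) = tr T c ∪ U := by rw [hC', Finset.biUnion_insert]
  have hcard : ((C'.biUnion (tr T)).card : ℝ) = (T.card : ℝ) - ((tr T c ∩ U).card : ℝ) + U.card := by
    rw [hUC']
    have h1 : (tr T c \ U).card + U.card = (tr T c ∪ U).card := Finset.card_sdiff_add_card _ _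
    have h2 : (tr T c ∩ U).card + (tr T c \ U).card = (tr T c).card :=
      Finset.card_inter_add_card_sdiff _ _
    rw [tr_card] at h2
    push_cast [← h1]
    have : ((tr T c \ U).card : ℝ) = (T.card : ℝ) - (tr T c ∩ U).card := by
      push_cast [← h2]; ring
    rw [this]
  have hPC' : P C' := by
    constructor
    · intro d hd
      rcases Finset.mem_insert.mp hd with h | h
      · subst h; exact hc
      · exact hCP.1 d h
    · rw [Finset.card_insert_of_notMem hcC, hcard]
      push_cast
      nlinarith [hCP.2]
  have hC's : C' ∈ s := Finset.mem_filter.mpr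
    ⟨Finset.mem_powerset.mpr (hsubpool C' hPC'.1), hPC'⟩
  have hle : ((C'.biUnion (tr T)).card : ℝ) ≤ ((C.biUnion (tr T)).card : ℝ) := by
    exact_mod_cast hmax C' hC's
  rw [hcard] at hle
  nlinarith


lemma stage (φ : Finset G → ℝ)
    (hempty : φ ∅ = 0)
    (hmono : ∀ A B : Finset G, A ⊆ B → φ A ≤ φ B)
    (htrans : ∀ (A : Finset G) (s : G), φ (A.image fun t => t * s) = φ A)
    (hsub : ∀ A B : Finset G, Disjoint A B → φ (A ∪ B) ≤ φ A + φ B)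
    (aε δ₀ δ' ε' : ℝ) (hε'0 : 0 < ε') (hε' : ε' ≤ 1/2)
    (hδ₀0 : 0 ≤ δ₀) (hδ₀ : δ₀ ≤ ε'^2/8) (hδ'0 : 0 ≤ δ') (hδ' : δ' ≤ ε'^2/8)
    (n : ℕ) (T : ℕ → Finset G)
    (hTne : ∀ i, i < n → (T i).Nonempty)
    (hTratio : ∀ i, i < n → φ (T i) ≤ aε * (T i).card)
    (hTinv : ∀ i j, i < j → j < n → ((((T i)⁻¹ * (T j)) \ (T j)).card : ℝ) ≤ δ' * (T j).card)
    (A : Finset G)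
    (hAinv : ∀ i, i < n → (((A \ A.filter fun c => ∀ t ∈ T i, t * c ∈ A).card : ℝ)) ≤ δ₀ * A.card) :
    ∀ d, d ≤ n → ∃ (B : Finset G) (cnt : ℝ),
      B ⊆ A ∧ 0 ≤ cnt ∧
      φ A ≤ φ B + aε * cnt ∧
      (1 - ε') * cnt ≤ (A.card : ℝ) - B.card ∧
      (∀ i, i < n - d → ((B \ B.filter fun c => ∀ t ∈ T i, t * c ∈ B).card : ℝ) ≤ δ₀ * A.card + δ' * cnt) ∧
      ((B.card : ℝ) ≤ ε' * A.card ∨ (B.card : ℝ) ≤ (1 - ε'/2)^d * A.card) := by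
  intro d
  induction d with
  | zero =>
    intro _
    exact ⟨A, 0, Finset.Subset.refl A, le_refl 0, by simp, by simp,
      fun i hi => by simpa using hAinv i (by omega), Or.inr (by simp)⟩
  | succ d ih =>
    intro hdn
    obtain ⟨B, cnt, hBA, hcnt0, hphi, hcount, hbdry, hcover⟩ := ih (by omega)
    by_cases hsmall : (B.card : ℝ) ≤ ε' * A.card
    · exact ⟨B, cnt, hBA, hcnt0, hphi, hcount,
        fun i hi => hbdry i (by omega), Or.inl hsmall⟩
    push_neg at hsmall
    set k := n - (d + 1) with hk
    have hkn : k < n := by omega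
    have hknd : k < n - d := by omega
    have hTkne := hTne k hkn
    have hTkpos : (0:ℝ) < (T k).card := by exact_mod_cast Finset.card_pos.mpr hTkne
    obtain ⟨C, hC1, hC2, hC3⟩ := greedy (T k) B hTkne ε' hε'0 (by linarith)
    set U : Finset G := C.biUnion (tr (T k)) with hU
    have hUB : U ⊆ B := Finset.biUnion_subset.mpr hC1
    set B' : Finset G := B \ U with hB'
    set cnt' : ℝ := cnt + (C.card : ℝ) * (T k).card with hcnt'
    have hB'B : B' ⊆ B := Finset.sdiff_subset
    have hB'card : (B'.card : ℝ) = (B.card : ℝ) - U.card := by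
      rw [hB', Finset.card_sdiff_of_subset hUB, Nat.cast_sub (Finset.card_le_card hUB)]
    have hCnn : (0:ℝ) ≤ (C.card : ℝ) := Nat.cast_nonneg _
    -- cardinal facts
    have hBcard_le : (B.card : ℝ) ≤ A.card := by exact_mod_cast Finset.card_le_card hBA
    have hApos : (0:ℝ) < A.card := by nlinarith
    have hcnt2A : cnt ≤ 2 * A.card := by
      have hB0 : (0:ℝ) ≤ B.card := Nat.cast_nonneg _
      nlinarith
    -- φ estimate
    have hphiB : φ B ≤ φ B' + (C.card : ℝ) * φ (T k) := by
      have hdis : Disjoint B' U := Finset.sdiff_disjoint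
      have hun : B' ∪ U = B := by
        rw [hB']; exact Finset.sdiff_union_of_subset hUB
      have h1 := hsub B' U hdis
      rw [hun] at h1
      have h2 := phi_biUnion_le φ hempty hmono htrans hsub (T k) C
      linarith
    have hphi' : φ A ≤ φ B' + aε * cnt' := by
      have h3 : (C.card : ℝ) * φ (T k) ≤ (C.card : ℝ) * (aε * (T k).card) :=
        mul_le_mul_of_nonneg_left (hTratio k hkn) hCnn
      rw [hcnt']
      nlinarith
    -- counting estimate
    have hcount' : (1 - ε') * cnt' ≤ (A.card : ℝ) - B'.card := by
      rw [hcnt', hB'card]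
      nlinarith [hC2]
    -- boundary estimate
    have hbdry' : ∀ i, i < n - (d+1) →
        ((B' \ B'.filter fun c => ∀ t ∈ T i, t * c ∈ B').card : ℝ) ≤ δ₀ * A.card + δ' * cnt' := by
      intro i hi
      have hik : i < k := by omega
      have hsubset : B' \ (B'.filter fun c => ∀ t ∈ T i, t * c ∈ B') ⊆
          (B \ (B.filter fun c => ∀ t ∈ T i, t * c ∈ B)) ∪
          C.biUnion (fun c => ((((T i)⁻¹ * (T k)) \ (T k)).image (fun x => x * c))) := by
        intro c' hc'
        rw [Finset.mem_sdiff] at hc'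
        obtain ⟨hc'B', hc'nZ⟩ := hc'
        have hc'B : c' ∈ B := hB'B hc'B'
        have hc'nU : c' ∉ U := (Finset.mem_sdiff.mp hc'B').2
        have : ¬ (∀ t ∈ T i, t * c' ∈ B') := by
          intro hall; exact hc'nZ (Finset.mem_filter.mpr ⟨hc'B', hall⟩)
        push_neg at this
        obtain ⟨t₀, ht₀, ht₀n⟩ := this
        by_cases hb : t₀ * c' ∈ B
        · -- t₀ * c' ∈ U
          have hbU : t₀ * c' ∈ U := by
            by_contra hnot
            exact ht₀n (Finset.mem_sdiff.mpr ⟨hb, hnot⟩)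
          obtain ⟨c, hcC, hmem⟩ := Finset.mem_biUnion.mp hbU
          obtain ⟨u, hu, huc⟩ := mem_tr.mp hmem
          have hc'eq : c' = (t₀⁻¹ * u) * c := by
            rw [mul_assoc, huc]
            group
          have hmemmul : t₀⁻¹ * u ∈ (T i)⁻¹ * (T k) := by
            refine Finset.mul_mem_mul ?_ hu
            rw [Finset.mem_inv]
            exact ⟨t₀, ht₀, rfl⟩
          have hnotTk : t₀⁻¹ * u ∉ T k := by
            intro hmemk
            apply hc'nU
            rw [hU]
            refine Finset.mem_biUnion.mpr ⟨c, hcC, mem_tr.mpr ⟨t₀⁻¹ * u, hmemk, hc'eq.symm⟩⟩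
          refine Finset.mem_union_right _ (Finset.mem_biUnion.mpr ⟨c, hcC, ?_⟩)
          exact Finset.mem_image.mpr ⟨t₀⁻¹ * u, Finset.mem_sdiff.mpr ⟨hmemmul, hnotTk⟩, hc'eq.symm⟩
        · refine Finset.mem_union_left _ (Finset.mem_sdiff.mpr ⟨hc'B, ?_⟩)
          intro hmem
          exact hb ((Finset.mem_filter.mp hmem).2 t₀ ht₀)
      have hcard1 := Finset.card_le_card hsubset
      have hcard2 := Finset.card_union_le
        (B \ (B.filter fun c => ∀ t ∈ T i, t * c ∈ B))
        (C.biUnion (fun c => ((((T i)⁻¹ * (T k)) \ (T k)).image (fun x => x * c))))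
      have hcard3 : (C.biUnion (fun c => ((((T i)⁻¹ * (T k)) \ (T k)).image (fun x => x * c)))).card
          ≤ C.card * (((T i)⁻¹ * (T k)) \ (T k)).card := by
        calc _ ≤ ∑ c ∈ C, ((((T i)⁻¹ * (T k)) \ (T k)).image (fun x => x * c)).card :=
              Finset.card_biUnion_le
          _ ≤ ∑ _c ∈ C, (((T i)⁻¹ * (T k)) \ (T k)).card :=
              Finset.sum_le_sum (fun c _ => Finset.card_image_le)
          _ = C.card * (((T i)⁻¹ * (T k)) \ (T k)).card := by
              rw [Finset.sum_const, smul_eq_mul]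
      have hinvik := hTinv i k hik hkn
      have hold := hbdry i (by omega)
      have hcast : ((B' \ B'.filter fun c => ∀ t ∈ T i, t * c ∈ B').card : ℝ) ≤
          ((B \ B.filter fun c => ∀ t ∈ T i, t * c ∈ B).card : ℝ) +
          (C.card : ℝ) * ((((T i)⁻¹ * (T k)) \ (T k)).card : ℝ) := by
        exact_mod_cast le_trans hcard1 (le_trans hcard2 (Nat.add_le_add_left hcard3 _))
      rw [hcnt']
      nlinarith [mul_le_mul_of_nonneg_left hinvik hCnn]
    -- coverage estimate
    have hB5 : (B.card : ℝ) ≤ (1 - ε'/2)^d * A.card := by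
      rcases hcover with h | h
      · linarith
      · exact h
    set Z : Finset G := B.filter (fun c => ∀ t ∈ T k, t * c ∈ B) with hZ
    have hZB : Z ⊆ B := Finset.filter_subset _ _
    have hZcard : (Z.card : ℝ) = (B.card : ℝ) - ((B \ Z).card : ℝ) := by
      rw [Finset.card_sdiff_of_subset hZB, Nat.cast_sub (Finset.card_le_card hZB)]
      ring
    have hbdryk := hbdry k hknd
    have hZlb : (1 - ε'/2) * B.card ≤ (Z.card : ℝ) := by
      rw [hZcard]
      nlinarith
    have hUZ : ε' * Z.card ≤ (U.card : ℝ) := by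
      have hsum : ∀ c ∈ Z, ε' * (T k).card ≤ (((tr (T k) c) ∩ U).card : ℝ) := by
        intro c hc
        apply hC3
        rw [tr_subset_iff]
        exact (Finset.mem_filter.mp hc).2
      have h1 : (Z.card : ℝ) * (ε' * (T k).card) ≤ ∑ c ∈ Z, (((tr (T k) c) ∩ U).card : ℝ) := by
        have := Finset.sum_le_sum hsum
        rwa [Finset.sum_const, nsmul_eq_mul] at this
      have h2 : ∑ c ∈ Z, (((tr (T k) c) ∩ U).card : ℝ) ≤ (T k).card * U.card := by
        have := double_count (T k) Z U
        push_cast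
        exact_mod_cast this
      nlinarith
    have hUlb : (ε'/2) * B.card ≤ (U.card : ℝ) := by
      nlinarith
    refine ⟨B', cnt', hB'B.trans hBA, add_nonneg hcnt0 (mul_nonneg hCnn hTkpos.le), hphi', hcount', hbdry', Or.inr ?_⟩
    rw [hB'card, pow_succ]
    have h1mε : (0:ℝ) ≤ (1 - ε'/2)^d := pow_nonneg (by linarith) d
    nlinarith


lemma bdry (K T : Finset G) (δ : ℝ)
    (h : (1-δ) * (T.card : ℝ) ≤ ((T.filter fun s => ∀ k ∈ K, k * s ∈ T).card : ℝ)) :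
    (((K * T) \ T).card : ℝ) ≤ (K.card : ℝ) * (δ * T.card) := by
  classical
  set int := T.filter fun s => ∀ k ∈ K, k * s ∈ T with hint
  have hsub : (K * T) \ T ⊆ K * (T \ int) := by
    intro x hx
    rw [Finset.mem_sdiff] at hx
    obtain ⟨hx1, hx2⟩ := hx
    rw [Finset.mem_mul] at hx1
    obtain ⟨k, hk, t, ht, hkt⟩ := hx1
    have htni : t ∉ int := by
      intro hti
      exact hx2 (hkt ▸ (Finset.mem_filter.mp hti).2 k hk)
    exact hkt ▸ Finset.mul_mem_mul hk (Finset.mem_sdiff.mpr ⟨ht, htni⟩)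
  have hc1 : ((K * T) \ T).card ≤ K.card * (T \ int).card :=
    le_trans (Finset.card_le_card hsub) Finset.card_mul_le
  have hc2 : ((T \ int).card : ℝ) ≤ δ * T.card := by
    rw [Finset.card_sdiff_of_subset (Finset.filter_subset _ _),
      Nat.cast_sub (Finset.card_le_card (Finset.filter_subset _ _))]
    linarith
  calc (((K * T) \ T).card : ℝ) ≤ (K.card : ℝ) * ((T \ int).card : ℝ) := by
        exact_mod_cast hc1
    _ ≤ (K.card : ℝ) * (δ * T.card) :=
        mul_le_mul_of_nonneg_left hc2 (Nat.cast_nonneg _)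


theorem stmt7' {G : Type*} [Group G] [DecidableEq G]
    (hFolner : ∀ (K : Finset G) (δ : ℝ), 0 < δ → ∃ F : Finset G, F.Nonempty ∧
      (1 - δ) * (F.card : ℝ) ≤ ((F.filter fun s => ∀ k ∈ K, k * s ∈ F).card : ℝ))
    (φ : Finset G → ℝ)
    (h0 : ∀ A : Finset G, 0 ≤ φ A) (hempty : φ ∅ = 0)
    (hmono : ∀ A B : Finset G, A ⊆ B → φ A ≤ φ B)
    (htrans : ∀ (A : Finset G) (s : G), φ (A.image fun t => t * s) = φ A)
    (hsub : ∀ A B : Finset G, Disjoint A B → φ (A ∪ B) ≤ φ A + φ B) :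
    ∃ b : ℝ, ∀ ε : ℝ, 0 < ε → ∃ (K : Finset G) (δ : ℝ), 0 < δ ∧
      ∀ F : Finset G, F.Nonempty →
        (1 - δ) * (F.card : ℝ) ≤ ((F.filter fun s => ∀ k ∈ K, k * s ∈ F).card : ℝ) →
        |φ F / (F.card : ℝ) - b| < ε := by
  classical
  set m : ℝ := φ {1} with hm
  have hm0 : 0 ≤ m := h0 _
  set Mem : Finset G → ℝ → Finset G → Prop := fun K δ F => F.Nonempty ∧
    (1 - δ) * (F.card : ℝ) ≤ ((F.filter fun s => ∀ k ∈ K, k * s ∈ F).card : ℝ) with hMem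
  set R : Finset G → ℝ → Set ℝ := fun K δ => (fun F : Finset G => φ F / F.card) '' {F | Mem K δ F}
    with hR
  set S : Set ℝ := {x | ∃ K δ, 0 < δ ∧ x = sInf (R K δ)} with hS
  set a : ℝ := sSup S with ha
  -- basic facts
  have hcardpos : ∀ F : Finset G, F.Nonempty → (0:ℝ) < F.card := by
    intro F hF; exact_mod_cast Finset.card_pos.mpr hF
  have hratio_le : ∀ F : Finset G, F.Nonempty → φ F / F.card ≤ m := by
    intro F hF
    rw [div_le_iff₀ (hcardpos F hF)]
    have := phi_le φ hempty htrans hsub F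
    linarith [this]
  have hratio_nn : ∀ F : Finset G, 0 ≤ φ F / F.card := by
    intro F; exact div_nonneg (h0 F) (Nat.cast_nonneg _)
  have hRne : ∀ K δ, 0 < δ → (R K δ).Nonempty := by
    intro K δ hδ
    obtain ⟨F, hF1, hF2⟩ := hFolner K δ hδ
    exact ⟨φ F / F.card, ⟨F, ⟨hF1, hF2⟩, rfl⟩⟩
  have hRlb : ∀ K δ, ∀ x ∈ R K δ, (0:ℝ) ≤ x := by
    rintro K δ x ⟨F, _, rfl⟩; exact hratio_nn F
  have hRub : ∀ K δ, ∀ x ∈ R K δ, x ≤ m := by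
    rintro K δ x ⟨F, hF, rfl⟩; exact hratio_le F hF.1
  have hRbdd : ∀ K δ, BddBelow (R K δ) := fun K δ => ⟨0, hRlb K δ⟩
  have hSne : S.Nonempty := ⟨sInf (R ∅ 1), ∅, 1, one_pos, rfl⟩
  have hSub : ∀ x ∈ S, x ≤ m := by
    rintro x ⟨K, δ, hδ, rfl⟩
    obtain ⟨y, hy⟩ := hRne K δ hδ
    exact csInf_le_of_le (hRbdd K δ) hy (hRub K δ y hy)
  have hSbdd : BddAbove S := ⟨m, hSub⟩
  have ha_le_m : a ≤ m := csSup_le hSne hSub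
  have ha0 : 0 ≤ a := by
    have h1 : sInf (R ∅ 1) ∈ S := ⟨∅, 1, one_pos, rfl⟩
    have h2 : (0:ℝ) ≤ sInf (R ∅ 1) := le_csInf (hRne ∅ 1 one_pos) (hRlb ∅ 1)
    exact le_trans h2 (le_csSup hSbdd h1)
  have hFact1 : ∀ K δ, 0 < δ → ∀ η, 0 < η → ∃ F, Mem K δ F ∧ φ F / F.card < a + η := by
    intro K δ hδ η hη
    have h1 : sInf (R K δ) ≤ a := le_csSup hSbdd ⟨K, δ, hδ, rfl⟩
    have h2 : sInf (R K δ) < a + η := by linarith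
    obtain ⟨x, hx, hlt⟩ := exists_lt_of_csInf_lt (hRne K δ hδ) h2
    obtain ⟨F, hF, rfl⟩ := hx
    exact ⟨F, hF, hlt⟩
  -- Fact 2 : upper bound along sufficiently invariant sets
  have hFact2 : ∀ ε : ℝ, 0 < ε → ε ≤ 1 → ∃ K δ, 0 < δ ∧
      ∀ F, Mem K δ F → φ F / F.card < a + ε := by
    intro ε hε hε1
    set ε' : ℝ := ε / (3*m+3) with hε'
    have hε'0 : 0 < ε' := by positivity
    have hε'half : ε' ≤ 1/2 := by
      rw [hε', div_le_iff₀ (by linarith)]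
      nlinarith
    set d8 : ℝ := ε'^2/8 with hd8
    have hd80 : 0 < d8 := by positivity
    obtain ⟨n, hn⟩ := exists_pow_lt_of_lt_one hε'0 (show 1 - ε'/2 < 1 by linarith)
    -- tiles
    have htiles : ∀ N : ℕ, ∃ T : ℕ → Finset G, ∀ j, j < N →
        (T j).Nonempty ∧ φ (T j) ≤ (a + ε') * (T j).card ∧
        ∀ i, i < j → ((((T i)⁻¹ * T j) \ T j).card : ℝ) ≤ d8 * (T j).card := by
      intro N
      induction N with
      | zero => exact ⟨fun _ => ∅, fun j hj => absurd hj (by omega)⟩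
      | succ N ihN =>
        obtain ⟨T, hT⟩ := ihN
        set K0 : Finset G := ((Finset.range N).biUnion fun i => (T i)⁻¹) ∪ {1} with hK0
        have hK0ne : (1:G) ∈ K0 := Finset.mem_union_right _ (Finset.mem_singleton_self 1)
        have hK0pos : (0:ℝ) < K0.card := by
          exact_mod_cast Finset.card_pos.mpr ⟨1, hK0ne⟩
        set δK : ℝ := d8 / K0.card with hδK
        have hδKpos : 0 < δK := by positivity
        obtain ⟨F, hFMem, hFratio⟩ := hFact1 K0 δK hδKpos ε' hε'0
        have hFpos : (0:ℝ) < F.card := hcardpos F hFMem.1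
        refine ⟨fun j => if j = N then F else T j, ?_⟩
        have hTN : (if N = N then F else T N) = F := if_pos rfl
        have hTne' : ∀ i, i ≠ N → (if i = N then F else T i) = T i := fun i hi => if_neg hi
        intro j hj
        dsimp only
        by_cases hjN : j = N
        · subst hjN
          rw [hTN]
          refine ⟨hFMem.1, ?_, ?_⟩
          · have h4 : φ F < (a + ε') * F.card := (div_lt_iff₀ hFpos).mp hFratio
            linarith
          · intro i hi
            rw [hTne' i (by omega)]
            have hsub2 : (T i)⁻¹ ⊆ K0 := by
              refine Finset.Subset.trans ?_ Finset.subset_union_left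
              intro x hx
              exact Finset.mem_biUnion.mpr ⟨i, Finset.mem_range.mpr hi, hx⟩
            have hsub3 : ((T i)⁻¹ * F) \ F ⊆ (K0 * F) \ F :=
              Finset.sdiff_subset_sdiff (Finset.mul_subset_mul_right hsub2)
                (Finset.Subset.refl F)
            have hb := bdry K0 F δK hFMem.2
            calc ((((T i)⁻¹ * F) \ F).card : ℝ) ≤ (((K0 * F) \ F).card : ℝ) := by
                  exact_mod_cast Finset.card_le_card hsub3
              _ ≤ (K0.card : ℝ) * (δK * F.card) := hb
              _ = d8 * F.card := by
                  have h5 : δK * (K0.card : ℝ) = d8 := div_mul_cancel₀ _ (ne_of_gt hK0pos)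
                  calc (K0.card : ℝ) * (δK * F.card) = (δK * (K0.card : ℝ)) * F.card := by ring
                    _ = d8 * F.card := by rw [h5]
        · have hjN' : j < N := by omega
          rw [hTne' j hjN]
          obtain ⟨p1, p2, p3⟩ := hT j hjN'
          refine ⟨p1, p2, ?_⟩
          intro i hi
          rw [hTne' i (by omega)]
          exact p3 i hi
    obtain ⟨T, hT⟩ := htiles n
    set K : Finset G := ((Finset.range n).biUnion T) ∪ {1} with hK
    refine ⟨K, d8, hd80, ?_⟩
    rintro A ⟨hAne, hAinvK⟩
    have hApos : (0:ℝ) < A.card := hcardpos A hAne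
    have hAinv : ∀ i, i < n →
        (((A \ A.filter fun c => ∀ t ∈ T i, t * c ∈ A).card : ℝ)) ≤ d8 * A.card := by
      intro i hi
      have hsubK : A.filter (fun s => ∀ k ∈ K, k * s ∈ A) ⊆
          A.filter (fun c => ∀ t ∈ T i, t * c ∈ A) := by
        intro s hs
        rw [Finset.mem_filter] at hs ⊢
        refine ⟨hs.1, fun t ht => hs.2 t ?_⟩
        exact Finset.mem_union_left _ (Finset.mem_biUnion.mpr ⟨i, Finset.mem_range.mpr hi, ht⟩)
      have h1 : (1 - d8) * (A.card : ℝ) ≤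
          ((A.filter fun c => ∀ t ∈ T i, t * c ∈ A).card : ℝ) := by
        refine le_trans hAinvK ?_
        exact_mod_cast Finset.card_le_card hsubK
      rw [Finset.card_sdiff_of_subset (Finset.filter_subset _ _),
        Nat.cast_sub (Finset.card_le_card (Finset.filter_subset _ _))]
      linarith
    obtain ⟨B, cnt, hBA, hcnt0, hphi, hcount, _, hcover⟩ :=
      stage φ hempty hmono htrans hsub (a + ε') d8 d8 ε' hε'0 hε'half hd80.le (le_refl _)
        hd80.le (le_refl _) n T (fun i hi => (hT i hi).1) (fun i hi => (hT i hi).2.1)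
        (fun i j hij hj => (hT j hj).2.2 i hij) A hAinv n (le_refl n)
    have hBsmall : (B.card : ℝ) ≤ ε' * A.card := by
      rcases hcover with h | h
      · exact h
      · refine le_trans h ?_
        exact mul_le_mul_of_nonneg_right hn.le hApos.le
    have hphiB : φ B ≤ ε' * A.card * m := by
      have h1 := phi_le φ hempty htrans hsub B
      have h2 : (B.card : ℝ) * m ≤ ε' * A.card * m := mul_le_mul_of_nonneg_right hBsmall hm0
      linarith
    have hBnn : (0:ℝ) ≤ B.card := Nat.cast_nonneg _
    have hcntA : (1 - ε') * cnt ≤ (A.card : ℝ) := by linarith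
    rw [div_lt_iff₀ hApos]
    -- (1-ε') * φ A ≤ (1-ε') ε' |A| m + (a+ε')|A|  and conclude
    have key : (1 - ε') * φ A < (1 - ε') * ((a + ε) * A.card) := by
      have h3 : (a + ε') * ((1 - ε') * cnt) ≤ (a + ε') * A.card :=
        mul_le_mul_of_nonneg_left hcntA (by linarith)
      have hεeq : ε = (3*m+3) * ε' := by rw [hε']; field_simp
      nlinarith [mul_nonneg hε'0.le hm0, mul_nonneg hε'0.le ha0, mul_nonneg hε'0.le hε.le,
        mul_nonneg (mul_nonneg hε'0.le hε'0.le) hm0, mul_pos hε'0 hApos,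
        mul_nonneg hm0 hApos.le, mul_nonneg (mul_nonneg hε'0.le hm0) hApos.le,
        mul_nonneg (mul_nonneg hε'0.le ha0) hApos.le,
        mul_nonneg (mul_nonneg hε'0.le hε.le) hApos.le]
    have : (0:ℝ) < 1 - ε' := by linarith
    nlinarith [key]
  -- Fact 3 : lower bound
  have hFact3 : ∀ ε : ℝ, 0 < ε → ∃ K δ, 0 < δ ∧
      ∀ F, Mem K δ F → a - ε < φ F / F.card := by
    intro ε hε
    have h1 : a - ε < sSup S := by rw [← ha]; linarith
    obtain ⟨x, hxS, hlt⟩ := exists_lt_of_lt_csSup hSne h1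
    obtain ⟨K, δ, hδ, rfl⟩ := hxS
    refine ⟨K, δ, hδ, fun F hF => lt_of_lt_of_le hlt ?_⟩
    exact csInf_le (hRbdd K δ) ⟨F, hF, rfl⟩
  -- conclusion
  refine ⟨a, fun ε hε => ?_⟩
  obtain ⟨K1, δ1, hδ1, hK1⟩ := hFact2 (min ε 1) (lt_min hε one_pos) (min_le_right _ _)
  obtain ⟨K2, δ2, hδ2, hK2⟩ := hFact3 ε hε
  refine ⟨K1 ∪ K2, min δ1 δ2, lt_min hδ1 hδ2, ?_⟩
  intro F hFne hFinv
  have hFsub : ∀ (Ki : Finset G), Ki ⊆ K1 ∪ K2 →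
      (F.filter fun s => ∀ k ∈ K1 ∪ K2, k * s ∈ F) ⊆
      (F.filter fun s => ∀ k ∈ Ki, k * s ∈ F) := by
    intro Ki hKi s hs
    rw [Finset.mem_filter] at hs ⊢
    exact ⟨hs.1, fun k hk => hs.2 k (hKi hk)⟩
  have hFnn : (0:ℝ) ≤ F.card := Nat.cast_nonneg _
  have hMem1 : Mem K1 δ1 F := by
    refine ⟨hFne, le_trans ?_ (le_trans hFinv ?_)⟩
    · have : min δ1 δ2 ≤ δ1 := min_le_left _ _
      nlinarith
    · exact_mod_cast Finset.card_le_card (hFsub K1 Finset.subset_union_left)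
  have hMem2 : Mem K2 δ2 F := by
    refine ⟨hFne, le_trans ?_ (le_trans hFinv ?_)⟩
    · have : min δ1 δ2 ≤ δ2 := min_le_right _ _
      nlinarith
    · exact_mod_cast Finset.card_le_card (hFsub K2 Finset.subset_union_right)
  have hub := hK1 F hMem1
  have hlb := hK2 F hMem2
  rw [abs_sub_lt_iff]
  constructor
  · have : min ε 1 ≤ ε := min_le_left _ _
    linarith
  · linarith


end OW

/-- the Ornstein–Weiss–Lindenstrauss–Weiss subadditivity theorem
(Proposition `P-subadditive`).  A nonempty finite set `F ⊆ G` is `(K, δ)`-invariant when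
`|{s ∈ F : Ks ⊆ F}| ≥ (1 − δ)|F|`; the Følner condition asserts that such sets exist for
all finite `K` and `δ > 0`. -/
theorem stmt7 {G : Type*} [Group G] [DecidableEq G]
    (hFolner : ∀ (K : Finset G) (δ : ℝ), 0 < δ → ∃ F : Finset G, F.Nonempty ∧
      (1 - δ) * (F.card : ℝ) ≤ ((F.filter fun s => ∀ k ∈ K, k * s ∈ F).card : ℝ))
    (φ : Finset G → ℝ)
    (h0 : ∀ A : Finset G, 0 ≤ φ A) (hempty : φ ∅ = 0)
    (hmono : ∀ A B : Finset G, A ⊆ B → φ A ≤ φ B)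
    (htrans : ∀ (A : Finset G) (s : G), φ (A.image fun t => t * s) = φ A)
    (hsub : ∀ A B : Finset G, Disjoint A B → φ (A ∪ B) ≤ φ A + φ B) :
    ∃ b : ℝ, ∀ ε : ℝ, 0 < ε → ∃ (K : Finset G) (δ : ℝ), 0 < δ ∧
      ∀ F : Finset G, F.Nonempty →
        (1 - δ) * (F.card : ℝ) ≤ ((F.filter fun s => ∀ k ∈ K, k * s ∈ F).card : ℝ) →
        |φ F / (F.card : ℝ) - b| < ε := by
  exact OW.stmt7' hFolner φ h0 hempty hmono htrans hsub
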